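/- arXiv:1803.04633 — 8 statements merged into one kernel-verified Lean document; each statement's English description precedes it below -/
import Mathlib

section
/- Let a ≤ b ≤ c be reals, let λ₁, λ₂, λ₃ ≥ 0 with λ₁ + λ₂ + λ₃ = 1, z₁, z₂ ∈ {0,1} with z₁ + z₂ = 1, z₁ ≥ λ₁, z₂ ≥ λ₃, and let x = λ₁a + λ₂b + λ₃c and w be any real with x² ≤ w ≤ λ₁a² + λ₂b² + λ₃c². If x = b (the variable sits at the interior discretization point), then w = b²; i.e., the piecewise quadratic relaxation is exact at the breakpoints. -/
/-- The piecewise quadratic relaxation is exact at the breakpoints: if the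
represented variable sits at the interior discretization point `b`, then
`w = b²`. -/
theorem piecewise_quadratic_exact_at_breakpoint
    (a b c l1 l2 l3 z1 z2 x w : ℝ)
    (hab : a ≤ b) (hbc : b ≤ c)
    (hl1 : 0 ≤ l1) (hl2 : 0 ≤ l2) (hl3 : 0 ≤ l3)
    (hsum : l1 + l2 + l3 = 1)
    (hz1 : z1 = 0 ∨ z1 = 1) (hz2 : z2 = 0 ∨ z2 = 1)
    (hzsum : z1 + z2 = 1)
    (hadj1 : l1 ≤ z1) (hadj3 : l3 ≤ z2)
    (hx : x = l1 * a + l2 * b + l3 * c)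
    (hw1 : x ^ 2 ≤ w) (hw2 : w ≤ l1 * a ^ 2 + l2 * b ^ 2 + l3 * c ^ 2)
    (hxb : x = b) :
    w = b ^ 2 := by
  have hlow : b ^ 2 ≤ w := by rw [← hxb]; exact hw1
  have hup : w ≤ b ^ 2 := by
    rcases hz1 with h1 | h1
    · -- z1 = 0, so l1 = 0
      have hl10 : l1 = 0 := le_antisymm (h1 ▸ hadj1) hl1
      subst hl10
      have hb : l2 * b + l3 * c = b := by linarith [hx ▸ hxb, hx]
      have key : l3 * (c - b) = 0 := by linear_combination hb - b * hsum
      rcases mul_eq_zero.mp key with h | h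
      · subst h
        have hl2e : l2 = 1 := by linarith
        rw [hl2e] at hw2; linarith
      · have hcb : c = b := by linarith
        subst hcb
        have hbb : l2 * c ^ 2 + l3 * c ^ 2 = c ^ 2 := by linear_combination c ^ 2 * hsum
        linarith
    · have h2 : z2 = 0 := by rcases hz2 with h | h <;> linarith
      have hl30 : l3 = 0 := le_antisymm (h2 ▸ hadj3) hl3
      subst hl30
      have hb : l1 * a + l2 * b = b := by linarith [hx ▸ hxb, hx]
      have key : l1 * (b - a) = 0 := by linear_combination b * hsum - hb
      rcases mul_eq_zero.mp key with h | h
      · subst h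
        have hl2e : l2 = 1 := by linarith
        rw [hl2e] at hw2; linarith
      · have hba : a = b := by linarith
        subst hba
        have hbb : l1 * a ^ 2 + l2 * a ^ 2 = a ^ 2 := by linear_combination a ^ 2 * hsum
        linarith
  linarith
end

section
/- Let a ≤ b ≤ c be reals, let λ₁, λ₂, λ₃ ≥ 0 with λ₁ + λ₂ + λ₃ = 1, z₁, z₂ ∈ {0,1} with z₁ + z₂ = 1, z₁ ≥ λ₁, z₂ ≥ λ₃, and set x = λ₁a + λ₂b + λ₃c. Then for any real w with x² ≤ w ≤ λ₁a² + λ₂b² + λ₃c², either a ≤ x ≤ b and x² ≤ w ≤ (a + b)x − ab, or b ≤ x ≤ c and x² ≤ w ≤ (b + c)x − bc; i.e., every feasible point of the piecewise quadratic λ-formulation lies in the union of the two secant-bounded convex quadratic regions. -/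
/-- Every feasible point of the piecewise quadratic λ-formulation lies in the
union of the two secant-bounded convex quadratic regions. -/
theorem piecewise_quadratic_in_union
    (a b c l1 l2 l3 z1 z2 x w : ℝ)
    (hab : a ≤ b) (hbc : b ≤ c)
    (hl1 : 0 ≤ l1) (hl2 : 0 ≤ l2) (hl3 : 0 ≤ l3)
    (hsum : l1 + l2 + l3 = 1)
    (hz1 : z1 = 0 ∨ z1 = 1) (hz2 : z2 = 0 ∨ z2 = 1)
    (hzsum : z1 + z2 = 1)
    (hadj1 : l1 ≤ z1) (hadj3 : l3 ≤ z2)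
    (hx : x = l1 * a + l2 * b + l3 * c)
    (hw1 : x ^ 2 ≤ w) (hw2 : w ≤ l1 * a ^ 2 + l2 * b ^ 2 + l3 * c ^ 2) :
    (a ≤ x ∧ x ≤ b ∧ x ^ 2 ≤ w ∧ w ≤ (a + b) * x - a * b) ∨
    (b ≤ x ∧ x ≤ c ∧ x ^ 2 ≤ w ∧ w ≤ (b + c) * x - b * c) := by
  rcases hz1 with h1 | h1
  · -- z1 = 0, so l1 = 0
    have hl1' : l1 = 0 := le_antisymm (h1 ▸ hadj1) hl1
    right
    subst hl1'
    have hl2' : l2 = 1 - l3 := by linarith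
    subst hl2'
    refine ⟨by nlinarith [mul_nonneg hl3 (sub_nonneg.mpr hbc)],
            by nlinarith [mul_nonneg hl2 (sub_nonneg.mpr hbc)], hw1,
            by have h : (b + c) * x - b * c = 0 * a ^ 2 + (1 - l3) * b ^ 2 + l3 * c ^ 2 := by rw [hx]; ring
               linarith⟩
  · -- z1 = 1, so z2 = 0, so l3 = 0
    have h2 : z2 = 0 := by linarith
    have hl3' : l3 = 0 := le_antisymm (h2 ▸ hadj3) hl3
    left
    subst hl3'
    have hl2' : l2 = 1 - l1 := by linarith
    subst hl2'
    refine ⟨by nlinarith [mul_nonneg hl2 (sub_nonneg.mpr hab)],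
            by nlinarith [mul_nonneg hl1 (sub_nonneg.mpr hab)], hw1,
            by have h : (a + b) * x - a * b = l1 * a ^ 2 + (1 - l1) * b ^ 2 + 0 * c ^ 2 := by rw [hx]; ring
               linarith⟩
end

section
/- Let a ≤ b ≤ c be reals and let (x, w) ∈ ℝ² satisfy either (a ≤ x ≤ b and x² ≤ w ≤ (a + b)x − ab) or (b ≤ x ≤ c and x² ≤ w ≤ (b + c)x − bc). Then there exist λ₁, λ₂, λ₃ ≥ 0 with λ₁ + λ₂ + λ₃ = 1 and z₁, z₂ ∈ {0,1} with z₁ + z₂ = 1, z₁ ≥ λ₁, z₂ ≥ λ₃, such that x = λ₁a + λ₂b + λ₃c and x² ≤ w ≤ λ₁a² + λ₂b² + λ₃c²; i.e., the piecewise quadratic λ-formulation exactly represents the union of the two secant-bounded convex quadratic regions. -/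
/-- The piecewise quadratic λ-formulation exactly represents the union of the
two secant-bounded convex quadratic regions: every point of the union is
feasible. -/
theorem union_in_piecewise_quadratic
    (a b c x w : ℝ) (hab : a ≤ b) (hbc : b ≤ c)
    (h : (a ≤ x ∧ x ≤ b ∧ x ^ 2 ≤ w ∧ w ≤ (a + b) * x - a * b) ∨
         (b ≤ x ∧ x ≤ c ∧ x ^ 2 ≤ w ∧ w ≤ (b + c) * x - b * c)) :
    ∃ l1 l2 l3 z1 z2 : ℝ,
      0 ≤ l1 ∧ 0 ≤ l2 ∧ 0 ≤ l3 ∧ l1 + l2 + l3 = 1 ∧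
      (z1 = 0 ∨ z1 = 1) ∧ (z2 = 0 ∨ z2 = 1) ∧ z1 + z2 = 1 ∧
      l1 ≤ z1 ∧ l3 ≤ z2 ∧
      x = l1 * a + l2 * b + l3 * c ∧
      x ^ 2 ≤ w ∧ w ≤ l1 * a ^ 2 + l2 * b ^ 2 + l3 * c ^ 2 := by
  rcases h with ⟨h1, h2, h3, h4⟩ | ⟨h1, h2, h3, h4⟩
  · rcases eq_or_lt_of_le hab with heq | hlt
    · subst heq
      have hx : x = a := le_antisymm h2 h1
      subst hx
      refine ⟨0, 1, 0, 1, 0, le_refl _, zero_le_one, le_refl _, by ring,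
        Or.inr rfl, Or.inl rfl, by ring, zero_le_one, le_refl _, by ring, h3, ?_⟩
      nlinarith
    · have hba : (0:ℝ) < b - a := by linarith
      refine ⟨(b - x) / (b - a), (x - a) / (b - a), 0, 1, 0,
        div_nonneg (by linarith) hba.le, div_nonneg (by linarith) hba.le,
        le_refl _, by field_simp; ring, Or.inr rfl, Or.inl rfl, by ring,
        by rw [div_le_one hba]; linarith, le_refl _, by field_simp; ring, h3, ?_⟩
      have : (b - x) / (b - a) * a ^ 2 + (x - a) / (b - a) * b ^ 2 + 0 * c ^ 2
          = (a + b) * x - a * b := by field_simp; ring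
      linarith
  · rcases eq_or_lt_of_le hbc with heq | hlt
    · subst heq
      have hx : x = b := le_antisymm h2 h1
      subst hx
      refine ⟨0, 1, 0, 1, 0, le_refl _, zero_le_one, le_refl _, by ring,
        Or.inr rfl, Or.inl rfl, by ring, zero_le_one, le_refl _, by ring, h3, ?_⟩
      nlinarith
    · have hcb : (0:ℝ) < c - b := by linarith
      refine ⟨0, (c - x) / (c - b), (x - b) / (c - b), 0, 1,
        le_refl _, div_nonneg (by linarith) hcb.le, div_nonneg (by linarith) hcb.le,
        by field_simp; ring, Or.inl rfl, Or.inr rfl, by ring, le_refl _,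
        by rw [div_le_one hcb]; linarith, by field_simp; ring, h3, ?_⟩
      have : 0 * a ^ 2 + (c - x) / (c - b) * b ^ 2 + (x - b) / (c - b) * c ^ 2
          = (b + c) * x - b * c := by field_simp; ring
      linarith
end

section
/- Let a ≤ b ≤ c, let λ₁, λ₂, λ₃ ≥ 0 with λ₁ + λ₂ + λ₃ = 1, z₁, z₂ ∈ {0,1} with z₁ + z₂ = 1, z₁ ≥ λ₁, z₂ ≥ λ₃, and set x = λ₁a + λ₂b + λ₃c. Then for any real w with x² ≤ w ≤ λ₁a² + λ₂b² + λ₃c², the relaxation gap satisfies w − x² ≤ max((b − a)², (c − b)²)/4. -/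
/-- The relaxation gap of the piecewise quadratic λ-formulation is at most
`max((b - a)², (c - b)²) / 4`. -/
theorem piecewise_quadratic_gap_bound
    (a b c l1 l2 l3 z1 z2 x w : ℝ)
    (hab : a ≤ b) (hbc : b ≤ c)
    (hl1 : 0 ≤ l1) (hl2 : 0 ≤ l2) (hl3 : 0 ≤ l3)
    (hsum : l1 + l2 + l3 = 1)
    (hz1 : z1 = 0 ∨ z1 = 1) (hz2 : z2 = 0 ∨ z2 = 1)
    (hzsum : z1 + z2 = 1)
    (hadj1 : l1 ≤ z1) (hadj3 : l3 ≤ z2)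
    (hx : x = l1 * a + l2 * b + l3 * c)
    (hw1 : x ^ 2 ≤ w) (hw2 : w ≤ l1 * a ^ 2 + l2 * b ^ 2 + l3 * c ^ 2) :
    w - x ^ 2 ≤ max ((b - a) ^ 2) ((c - b) ^ 2) / 4 := by
  rcases hz1 with h1 | h1 <;> rcases hz2 with h2 | h2
  · linarith
  · have hl10 : l1 = 0 := le_antisymm (by linarith) hl1
    have h23 : l3 = 1 - l2 := by linarith
    have hkey : w - x ^ 2 ≤ (c - b) ^ 2 / 4 := by
      subst hx hl10 h23
      nlinarith [mul_nonneg (sq_nonneg (l2 - (1 - l2))) (sq_nonneg (c - b)),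
        mul_nonneg (mul_nonneg hl2 hl3) (sq_nonneg (c - b))]
    have hm : (c - b) ^ 2 ≤ max ((b - a) ^ 2) ((c - b) ^ 2) := le_max_right _ _
    linarith
  · have hl30 : l3 = 0 := le_antisymm (by linarith) hl3
    have h12 : l2 = 1 - l1 := by linarith
    have hkey : w - x ^ 2 ≤ (b - a) ^ 2 / 4 := by
      subst hx hl30 h12
      nlinarith [mul_nonneg (sq_nonneg (l1 - (1 - l1))) (sq_nonneg (b - a)),
        mul_nonneg (mul_nonneg hl1 hl2) (sq_nonneg (b - a))]
    have hm : (b - a) ^ 2 ≤ max ((b - a) ^ 2) ((c - b) ^ 2) := le_max_left _ _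
    linarith
  · linarith
end

section
/- Let l₁ ≤ u₁, l₂ ≤ u₂, l₃ ≤ u₃ be reals and let x₁ ∈ [l₁, u₁], x₂ ∈ [l₂, u₂], x₃ ∈ [l₃, u₃]. Then the lifted point (x₁, x₂, x₃, x₁x₂x₃) ∈ ℝ⁴ lies in the convex hull of the eight lifted vertex points {(v₁, v₂, v₃, v₁v₂v₃) : v₁ ∈ {l₁, u₁}, v₂ ∈ {l₂, u₂}, v₃ ∈ {l₃, u₃}}; i.e., the extreme-point (λ) representation of the convex hull relaxation of a trilinear term is valid on a box. -/
/-- The lifted point `(x₁, x₂, x₃, x₁x₂x₃)` of a trilinear term on a box lies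
in the convex hull of the eight lifted vertices of the box. -/
theorem trilinear_extreme_point_representation
    (l₁ u₁ l₂ u₂ l₃ u₃ x₁ x₂ x₃ : ℝ)
    (h₁ : l₁ ≤ u₁) (h₂ : l₂ ≤ u₂) (h₃ : l₃ ≤ u₃)
    (hx₁ : x₁ ∈ Set.Icc l₁ u₁) (hx₂ : x₂ ∈ Set.Icc l₂ u₂)
    (hx₃ : x₃ ∈ Set.Icc l₃ u₃) :
    (![x₁, x₂, x₃, x₁ * x₂ * x₃] : Fin 4 → ℝ) ∈
      convexHull ℝ {p : Fin 4 → ℝ | ∃ v₁ v₂ v₃ : ℝ,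
        (v₁ = l₁ ∨ v₁ = u₁) ∧ (v₂ = l₂ ∨ v₂ = u₂) ∧ (v₃ = l₃ ∨ v₃ = u₃) ∧
        p = ![v₁, v₂, v₃, v₁ * v₂ * v₃]} := by
  set S : Set (Fin 4 → ℝ) := {p : Fin 4 → ℝ | ∃ v₁ v₂ v₃ : ℝ,
        (v₁ = l₁ ∨ v₁ = u₁) ∧ (v₂ = l₂ ∨ v₂ = u₂) ∧ (v₃ = l₃ ∨ v₃ = u₃) ∧
        p = ![v₁, v₂, v₃, v₁ * v₂ * v₃]} with hS
  have hconv : Convex ℝ (convexHull ℝ S) := convex_convexHull ℝ S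
  rw [← segment_eq_Icc h₁] at hx₁
  rw [← segment_eq_Icc h₂] at hx₂
  rw [← segment_eq_Icc h₃] at hx₃
  obtain ⟨a₁, b₁, ha₁, hb₁, hab₁, he₁⟩ := hx₁
  obtain ⟨a₂, b₂, ha₂, hb₂, hab₂, he₂⟩ := hx₂
  obtain ⟨a₃, b₃, ha₃, hb₃, hab₃, he₃⟩ := hx₃
  obtain rfl : b₁ = 1 - a₁ := by linarith
  obtain rfl : b₂ = 1 - a₂ := by linarith
  obtain rfl : b₃ = 1 - a₃ := by linarith
  simp only [smul_eq_mul] at he₁ he₂ he₃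
  -- step 3: for fixed vertex choices v₁ v₂, lift in x₃
  have step3 : ∀ v₁ v₂ : ℝ, (v₁ = l₁ ∨ v₁ = u₁) → (v₂ = l₂ ∨ v₂ = u₂) →
      (![v₁, v₂, x₃, v₁ * v₂ * x₃] : Fin 4 → ℝ) ∈ convexHull ℝ S := by
    intro v₁ v₂ hv₁ hv₂
    have hl : (![v₁, v₂, l₃, v₁ * v₂ * l₃] : Fin 4 → ℝ) ∈ convexHull ℝ S :=
      subset_convexHull ℝ S ⟨v₁, v₂, l₃, hv₁, hv₂, Or.inl rfl, rfl⟩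
    have hu : (![v₁, v₂, u₃, v₁ * v₂ * u₃] : Fin 4 → ℝ) ∈ convexHull ℝ S :=
      subset_convexHull ℝ S ⟨v₁, v₂, u₃, hv₁, hv₂, Or.inr rfl, rfl⟩
    have := hconv hl hu ha₃ hb₃ hab₃
    convert this using 1
    funext i
    fin_cases i <;>
      simp [Matrix.cons_val_zero, Matrix.cons_val_one, ← he₃] <;> ring
  have step2 : ∀ v₁ : ℝ, (v₁ = l₁ ∨ v₁ = u₁) →
      (![v₁, x₂, x₃, v₁ * x₂ * x₃] : Fin 4 → ℝ) ∈ convexHull ℝ S := by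
    intro v₁ hv₁
    have hl := step3 v₁ l₂ hv₁ (Or.inl rfl)
    have hu := step3 v₁ u₂ hv₁ (Or.inr rfl)
    have := hconv hl hu ha₂ hb₂ hab₂
    convert this using 1
    funext i
    fin_cases i <;>
      simp [Matrix.cons_val_zero, Matrix.cons_val_one, ← he₂] <;> ring
  have hl := step2 l₁ (Or.inl rfl)
  have hu := step2 u₁ (Or.inr rfl)
  have := hconv hl hu ha₁ hb₁ hab₁
  convert this using 1
  funext i
  fin_cases i <;>
    simp [Matrix.cons_val_zero, Matrix.cons_val_one, ← he₁] <;> ring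
end

section
/- Let lx ≤ ux and ly ≤ uy be reals and let x ∈ [lx, ux], y ∈ [ly, uy]. Then (x, y, xy) ∈ ℝ³ lies in the convex hull of the four lifted vertex points {(vx, vy, vx·vy) : vx ∈ {lx, ux}, vy ∈ {ly, uy}}; i.e., the extreme-point representation of the convex hull (McCormick) relaxation of a bilinear term is valid on a box. -/
/-- The lifted point `(x, y, xy)` of a bilinear term on a box lies in the
convex hull of the four lifted vertices of the box (McCormick hull). -/
theorem bilinear_extreme_point_representation
    (lx ux ly uy x y : ℝ)
    (hx' : lx ≤ ux) (hy' : ly ≤ uy)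
    (hx : x ∈ Set.Icc lx ux) (hy : y ∈ Set.Icc ly uy) :
    (![x, y, x * y] : Fin 3 → ℝ) ∈
      convexHull ℝ {p : Fin 3 → ℝ | ∃ vx vy : ℝ,
        (vx = lx ∨ vx = ux) ∧ (vy = ly ∨ vy = uy) ∧
        p = ![vx, vy, vx * vy]} := by
  rw [← segment_eq_Icc hx'] at hx
  rw [← segment_eq_Icc hy'] at hy
  obtain ⟨a, b, ha, hb, hab, hxe⟩ := hx
  obtain ⟨c, d, hc, hd, hcd, hye⟩ := hy
  obtain rfl : b = 1 - a := by linarith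
  obtain rfl : d = 1 - c := by linarith
  set S : Set (Fin 3 → ℝ) := {p : Fin 3 → ℝ | ∃ vx vy : ℝ,
        (vx = lx ∨ vx = ux) ∧ (vy = ly ∨ vy = uy) ∧
        p = ![vx, vy, vx * vy]}
  have hconv : Convex ℝ (convexHull ℝ S) := convex_convexHull ℝ S
  have h1 : (![lx, ly, lx * ly] : Fin 3 → ℝ) ∈ convexHull ℝ S :=
    subset_convexHull ℝ S ⟨lx, ly, Or.inl rfl, Or.inl rfl, rfl⟩
  have h2 : (![lx, uy, lx * uy] : Fin 3 → ℝ) ∈ convexHull ℝ S :=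
    subset_convexHull ℝ S ⟨lx, uy, Or.inl rfl, Or.inr rfl, rfl⟩
  have h3 : (![ux, ly, ux * ly] : Fin 3 → ℝ) ∈ convexHull ℝ S :=
    subset_convexHull ℝ S ⟨ux, ly, Or.inr rfl, Or.inl rfl, rfl⟩
  have h4 : (![ux, uy, ux * uy] : Fin 3 → ℝ) ∈ convexHull ℝ S :=
    subset_convexHull ℝ S ⟨ux, uy, Or.inr rfl, Or.inr rfl, rfl⟩
  have q1 : c • (![lx, ly, lx * ly] : Fin 3 → ℝ) + (1 - c) • ![lx, uy, lx * uy]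
      ∈ convexHull ℝ S := hconv h1 h2 hc hd hcd
  have q2 : c • (![ux, ly, ux * ly] : Fin 3 → ℝ) + (1 - c) • ![ux, uy, ux * uy]
      ∈ convexHull ℝ S := hconv h3 h4 hc hd hcd
  have := hconv q1 q2 ha hb hab
  convert this using 1
  funext i
  fin_cases i <;>
    simp [Matrix.cons_val_zero, Matrix.cons_val_one, ← hxe, ← hye] <;> ring
end

section
/- For i = 1, 2, 3 let mᵢ : {0,1,2} → ℝ with mᵢ(0) ≤ mᵢ(1) ≤ mᵢ(2). Let λ : {0,1,2}³ → ℝ be nonnegative with total sum 1, and for each i let zᵢ₁, zᵢ₂ ∈ {0,1} with zᵢ₁ + zᵢ₂ = 1, zᵢ₁ ≥ Σ{λ(g) : gᵢ = 0} and zᵢ₂ ≥ Σ{λ(g) : gᵢ = 2}. Set xᵢ = Σ_g λ(g)·mᵢ(gᵢ) and x̂ = Σ_g λ(g)·m₁(g₁)m₂(g₂)m₃(g₃). Then there exists s ∈ {0,1}³ such that (x₁, x₂, x₃, x̂) lies in the convex hull in ℝ⁴ of the eight lifted points {(m₁(g₁), m₂(g₂), m₃(g₃), m₁(g₁)m₂(g₂)m₃(g₃))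 : gᵢ ∈ {sᵢ, sᵢ+1}}; i.e., every feasible point of the piecewise trilinear λ-formulation lies in the union over the 8 subboxes of the convex hulls of their lifted vertices. -/
/-- Every feasible point of the piecewise trilinear λ-formulation lies in the
union, over the 8 subboxes, of the convex hulls of their lifted vertices. -/
theorem piecewise_trilinear_in_union_of_hulls
    (m : Fin 3 → Fin 3 → ℝ)
    (hm : ∀ i : Fin 3, m i 0 ≤ m i 1 ∧ m i 1 ≤ m i 2)
    (lam : (Fin 3 → Fin 3) → ℝ)
    (hlam : ∀ g, 0 ≤ lam g)
    (hsum : ∑ g : Fin 3 → Fin 3, lam g = 1)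
    (z1 z2 : Fin 3 → ℝ)
    (hz1 : ∀ i, z1 i = 0 ∨ z1 i = 1) (hz2 : ∀ i, z2 i = 0 ∨ z2 i = 1)
    (hzsum : ∀ i, z1 i + z2 i = 1)
    (hadj1 : ∀ i, ∑ g ∈ Finset.univ.filter (fun g : Fin 3 → Fin 3 => g i = 0), lam g ≤ z1 i)
    (hadj2 : ∀ i, ∑ g ∈ Finset.univ.filter (fun g : Fin 3 → Fin 3 => g i = 2), lam g ≤ z2 i)
    (x : Fin 3 → ℝ) (xhat : ℝ)
    (hx : ∀ i, x i = ∑ g : Fin 3 → Fin 3, lam g * m i (g i))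
    (hxhat : xhat = ∑ g : Fin 3 → Fin 3, lam g * (m 0 (g 0) * m 1 (g 1) * m 2 (g 2))) :
    ∃ s : Fin 3 → Fin 2,
      (![x 0, x 1, x 2, xhat] : Fin 4 → ℝ) ∈
        convexHull ℝ {p : Fin 4 → ℝ | ∃ g : Fin 3 → Fin 3,
          (∀ i, (g i : ℕ) = (s i : ℕ) ∨ (g i : ℕ) = (s i : ℕ) + 1) ∧
          p = ![m 0 (g 0), m 1 (g 1), m 2 (g 2),
                m 0 (g 0) * m 1 (g 1) * m 2 (g 2)]} := by
  classical
  set s : Fin 3 → Fin 2 := fun i => if z1 i = 1 then 0 else 1 with hs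
  -- lam vanishes on non-allowed grid points
  have hzero : ∀ g : Fin 3 → Fin 3, ∀ i : Fin 3,
      ¬((g i : ℕ) = (s i : ℕ) ∨ (g i : ℕ) = (s i : ℕ) + 1) → lam g = 0 := by
    intro g i hgi
    by_cases h1 : z1 i = 1
    · have hs0 : ((s i : ℕ)) = 0 := by simp [hs, h1]
      rw [hs0] at hgi
      push_neg at hgi
      have hg2 : g i = 2 := by
        have hlt := (g i).isLt
        have : (g i : ℕ) = 2 := by omega
        exact Fin.ext this
      have hz2i : z2 i = 0 := by have := hzsum i; linarith
      have hle := hadj2 i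
      rw [hz2i] at hle
      have hsum0 : ∑ g ∈ Finset.univ.filter (fun g : Fin 3 → Fin 3 => g i = 2), lam g = 0 :=
        le_antisymm hle (Finset.sum_nonneg fun g _ => hlam g)
      exact (Finset.sum_eq_zero_iff_of_nonneg (fun g _ => hlam g)).mp hsum0 g
        (by simp [hg2])
    · have hz1i : z1 i = 0 := (hz1 i).resolve_right h1
      have hs1 : ((s i : ℕ)) = 1 := by simp [hs, h1]
      rw [hs1] at hgi
      push_neg at hgi
      have hg0 : g i = 0 := by
        have hlt := (g i).isLt
        have : (g i : ℕ) = 0 := by omega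
        exact Fin.ext this
      have hle := hadj1 i
      rw [hz1i] at hle
      have hsum0 : ∑ g ∈ Finset.univ.filter (fun g : Fin 3 → Fin 3 => g i = 0), lam g = 0 :=
        le_antisymm hle (Finset.sum_nonneg fun g _ => hlam g)
      exact (Finset.sum_eq_zero_iff_of_nonneg (fun g _ => hlam g)).mp hsum0 g
        (by simp [hg0])
  refine ⟨s, ?_⟩
  set t : Finset (Fin 3 → Fin 3) :=
    Finset.univ.filter
      (fun g : Fin 3 → Fin 3 => ∀ i, (g i : ℕ) = (s i : ℕ) ∨ (g i : ℕ) = (s i : ℕ) + 1)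
    with ht
  set v : (Fin 3 → Fin 3) → (Fin 4 → ℝ) :=
    fun g => ![m 0 (g 0), m 1 (g 1), m 2 (g 2), m 0 (g 0) * m 1 (g 1) * m 2 (g 2)] with hv
  have hout : ∀ g ∈ Finset.univ, g ∉ t → lam g = 0 := by
    intro g _ hgt
    rw [ht, Finset.mem_filter] at hgt
    push_neg at hgt
    obtain ⟨i, hi⟩ := hgt (Finset.mem_univ g)
    exact hzero g i (not_or.mpr hi)
  have hsumt : ∑ g ∈ t, lam g = 1 := by
    rw [← hsum]
    exact Finset.sum_subset (Finset.subset_univ t) hout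
  have hpt : (![x 0, x 1, x 2, xhat] : Fin 4 → ℝ) = ∑ g ∈ t, lam g • v g := by
    have hfull : ∑ g ∈ t, lam g • v g = ∑ g : Fin 3 → Fin 3, lam g • v g := by
      refine Finset.sum_subset (Finset.subset_univ t) ?_
      intro g hg hgt
      rw [hout g hg hgt, zero_smul]
    rw [hfull]
    funext j
    rw [Finset.sum_apply]
    fin_cases j <;>
      simp [hv, hx 0, hx 1, hx 2, hxhat, smul_eq_mul]
  rw [hpt]
  have hmem : ∀ g ∈ t, v g ∈ {p : Fin 4 → ℝ | ∃ g : Fin 3 → Fin 3,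
      (∀ i, (g i : ℕ) = (s i : ℕ) ∨ (g i : ℕ) = (s i : ℕ) + 1) ∧
      p = ![m 0 (g 0), m 1 (g 1), m 2 (g 2), m 0 (g 0) * m 1 (g 1) * m 2 (g 2)]} := by
    intro g hg
    rw [ht, Finset.mem_filter] at hg
    exact ⟨g, hg.2, rfl⟩
  have := Finset.centerMass_mem_convexHull t (fun g _ => hlam g)
    (by rw [hsumt]; norm_num) hmem
  rwa [Finset.centerMass_eq_of_sum_1 _ _ hsumt] at this
end

section
/- For i = 1, 2, 3 let mᵢ : {0,1,2} → ℝ with mᵢ(0) ≤ mᵢ(1) ≤ mᵢ(2), and let (x₁, x₂, x₃) satisfy mᵢ(0) ≤ xᵢ ≤ mᵢ(2) for each i. Then there exist nonnegative λ : {0,1,2}³ → ℝ with total sum 1 and, for each i, zᵢ₁, zᵢ₂ ∈ {0,1} with zᵢ₁ + zᵢ₂ = 1, zᵢ₁ ≥ Σ{λ(g) : gᵢ = 0}, zᵢ₂ ≥ Σ{λ(g) : gᵢ = 2}, such that xᵢ = Σ_g λ(g)·mᵢ(gᵢ) for each i and x₁x₂x₃ = Σ_g λ(g)·m₁(g₁)m₂(g₂)m₃(g₃);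 i.e., the graph of the trilinear function over the partitioned box is contained in the feasible set of the piecewise trilinear λ-formulation, so the formulation is a valid relaxation. -/
def trilinEquiv : (Fin 3 × Fin 3 × Fin 3) ≃ (Fin 3 → Fin 3) where
  toFun p := ![p.1, p.2.1, p.2.2]
  invFun g := (g 0, g 1, g 2)
  left_inv := by rintro ⟨a, b, c⟩; simp
  right_inv := by intro g; funext i; fin_cases i <;> rfl

lemma trilinexp (f : (Fin 3 → Fin 3) → ℝ) :
    ∑ g : Fin 3 → Fin 3, f g
      = ∑ a : Fin 3, ∑ b : Fin 3, ∑ c : Fin 3, f ![a, b, c] := by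
  rw [← Equiv.sum_comp trilinEquiv f, Fintype.sum_prod_type]
  simp [Fintype.sum_prod_type, trilinEquiv]

lemma trilin1d (m0 m1 m2 x : ℝ) (h01 : m0 ≤ m1) (h12 : m1 ≤ m2)
    (hl : m0 ≤ x) (hr : x ≤ m2) :
    ∃ w : Fin 3 → ℝ, (∀ j, 0 ≤ w j) ∧ w 0 + w 1 + w 2 = 1 ∧
      w 0 * m0 + w 1 * m1 + w 2 * m2 = x ∧ (w 2 = 0 ∨ w 0 = 0) := by
  by_cases hx1 : x ≤ m1
  · by_cases he : m0 = m1
    · refine ⟨![0, 1, 0], ?_, by norm_num [Matrix.cons_val_two, Matrix.tail_cons, Matrix.head_cons], ?_, Or.inl rfl⟩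
      · intro j; fin_cases j <;> norm_num
      · have : x = m1 := le_antisymm hx1 (he ▸ hl)
        simp [this]
    · have hlt : m0 < m1 := lt_of_le_of_ne h01 he
      set t := (x - m0) / (m1 - m0) with ht
      have ht0 : 0 ≤ t := div_nonneg (by linarith) (by linarith)
      have ht1 : t ≤ 1 := by
        rw [ht, div_le_one (by linarith)]; linarith
      refine ⟨![1 - t, t, 0], ?_, by norm_num [Matrix.cons_val_two, Matrix.tail_cons, Matrix.head_cons], ?_, Or.inl rfl⟩
      · intro j; fin_cases j <;> simp <;> linarith
      · simp only [Matrix.cons_val_zero, Matrix.cons_val_one, Matrix.head_cons,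
          Matrix.cons_val_two, Matrix.tail_cons]
        have hc : t * (m1 - m0) = x - m0 := div_mul_cancel₀ _ (by linarith)
        linear_combination hc
  · push_neg at hx1
    have hlt : m1 < m2 := lt_of_lt_of_le hx1 hr
    set t := (x - m1) / (m2 - m1) with ht
    have ht0 : 0 ≤ t := div_nonneg (by linarith) (by linarith)
    have ht1 : t ≤ 1 := by
      rw [ht, div_le_one (by linarith)]; linarith
    refine ⟨![0, 1 - t, t], ?_, by norm_num [Matrix.cons_val_two, Matrix.tail_cons, Matrix.head_cons], ?_, Or.inr rfl⟩
    · intro j; fin_cases j <;> simp <;> linarith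
    · simp only [Matrix.cons_val_zero, Matrix.cons_val_one, Matrix.head_cons,
        Matrix.cons_val_two, Matrix.tail_cons]
      have hc : t * (m2 - m1) = x - m1 := div_mul_cancel₀ _ (by linarith)
      linear_combination hc

/-- The graph of the trilinear function over the partitioned box is contained
in the feasible set of the piecewise trilinear λ-formulation. -/
theorem trilinear_graph_in_lambda_formulation
    (m : Fin 3 → Fin 3 → ℝ)
    (hm : ∀ i : Fin 3, m i 0 ≤ m i 1 ∧ m i 1 ≤ m i 2)
    (x : Fin 3 → ℝ)
    (hx : ∀ i, m i 0 ≤ x i ∧ x i ≤ m i 2) :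
    ∃ (lam : (Fin 3 → Fin 3) → ℝ) (z1 z2 : Fin 3 → ℝ),
      (∀ g, 0 ≤ lam g) ∧
      (∑ g : Fin 3 → Fin 3, lam g = 1) ∧
      (∀ i, z1 i = 0 ∨ z1 i = 1) ∧ (∀ i, z2 i = 0 ∨ z2 i = 1) ∧
      (∀ i, z1 i + z2 i = 1) ∧
      (∀ i, ∑ g ∈ Finset.univ.filter (fun g : Fin 3 → Fin 3 => g i = 0), lam g ≤ z1 i) ∧
      (∀ i, ∑ g ∈ Finset.univ.filter (fun g : Fin 3 → Fin 3 => g i = 2), lam g ≤ z2 i) ∧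
      (∀ i, x i = ∑ g : Fin 3 → Fin 3, lam g * m i (g i)) ∧
      x 0 * x 1 * x 2 =
        ∑ g : Fin 3 → Fin 3, lam g * (m 0 (g 0) * m 1 (g 1) * m 2 (g 2)) := by
  have H : ∀ i : Fin 3, ∃ w : Fin 3 → ℝ, (∀ j, 0 ≤ w j) ∧ w 0 + w 1 + w 2 = 1 ∧
      w 0 * m i 0 + w 1 * m i 1 + w 2 * m i 2 = x i ∧ (w 2 = 0 ∨ w 0 = 0) :=
    fun i => trilin1d _ _ _ _ (hm i).1 (hm i).2 (hx i).1 (hx i).2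
  choose w hpos hsum hval hsupp using H
  refine ⟨fun g => w 0 (g 0) * w 1 (g 1) * w 2 (g 2),
    fun i => if w i 2 = 0 then 1 else 0, fun i => if w i 2 = 0 then 0 else 1,
    ?_, ?_, ?_, ?_, ?_, ?_, ?_, ?_, ?_⟩
  · intro g
    exact mul_nonneg (mul_nonneg (hpos 0 _) (hpos 1 _)) (hpos 2 _)
  · rw [trilinexp]
    simp [Fin.sum_univ_three]
    linear_combination (w 1 0 + w 1 1 + w 1 2) * (w 2 0 + w 2 1 + w 2 2) * hsum 0 +
      (w 2 0 + w 2 1 + w 2 2) * hsum 1 + hsum 2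
  · intro i; dsimp only; split_ifs <;> simp
  · intro i; dsimp only; split_ifs <;> simp
  · intro i; dsimp only; split_ifs <;> ring
  · intro i
    rw [Finset.sum_filter, trilinexp]
    have hle : ∀ k : Fin 3, w k 0 ≤ if w k 2 = 0 then (1:ℝ) else 0 := by
      intro k
      rcases hsupp k with h | h
      · rw [if_pos h]
        have := hpos k 1; have := hpos k 2; have := hsum k; linarith
      · split_ifs with h2
        · have := hpos k 1; have := hpos k 2; have := hsum k; linarith
        · exact le_of_eq h
    fin_cases i <;>
      simp [Fin.sum_univ_three]
    · calc _ = w 0 0 := by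
            linear_combination w 0 0 * (w 2 0 + w 2 1 + w 2 2) * hsum 1 + w 0 0 * hsum 2
        _ ≤ _ := hle 0
    · calc _ = w 1 0 := by
            linear_combination w 1 0 * (w 2 0 + w 2 1 + w 2 2) * hsum 0 + w 1 0 * hsum 2
        _ ≤ _ := hle 1
    · calc _ = w 2 0 := by
            linear_combination w 2 0 * (w 1 0 + w 1 1 + w 1 2) * hsum 0 + w 2 0 * hsum 1
        _ ≤ _ := hle 2
  · intro i
    rw [Finset.sum_filter, trilinexp]
    have hle : ∀ k : Fin 3, w k 2 ≤ if w k 2 = 0 then (0:ℝ) else 1 := by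
      intro k
      split_ifs with h2
      · exact le_of_eq h2
      · have := hpos k 0; have := hpos k 1; have := hsum k; linarith
    fin_cases i <;>
      simp [Fin.sum_univ_three]
    · calc _ = w 0 2 := by
            linear_combination w 0 2 * (w 2 0 + w 2 1 + w 2 2) * hsum 1 + w 0 2 * hsum 2
        _ ≤ _ := hle 0
    · calc _ = w 1 2 := by
            linear_combination w 1 2 * (w 2 0 + w 2 1 + w 2 2) * hsum 0 + w 1 2 * hsum 2
        _ ≤ _ := hle 1
    · calc _ = w 2 2 := by
            linear_combination w 2 2 * (w 1 0 + w 1 1 + w 1 2) * hsum 0 + w 2 2 * hsum 1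
        _ ≤ _ := hle 2
  · intro i
    rw [trilinexp]
    fin_cases i <;>
      simp [Fin.sum_univ_three]
    · linear_combination -(w 1 0 + w 1 1 + w 1 2) * (w 2 0 + w 2 1 + w 2 2) * hval 0 -
        x 0 * (w 2 0 + w 2 1 + w 2 2) * hsum 1 - x 0 * hsum 2
    · linear_combination -(w 0 0 + w 0 1 + w 0 2) * (w 2 0 + w 2 1 + w 2 2) * hval 1 -
        x 1 * (w 2 0 + w 2 1 + w 2 2) * hsum 0 - x 1 * hsum 2
    · linear_combination -(w 0 0 + w 0 1 + w 0 2) * (w 1 0 + w 1 1 + w 1 2) * hval 2 -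
        x 2 * (w 1 0 + w 1 1 + w 1 2) * hsum 0 - x 2 * hsum 1
  · rw [trilinexp]
    simp [Fin.sum_univ_three]
    linear_combination
      -(w 1 0 * m 1 0 + w 1 1 * m 1 1 + w 1 2 * m 1 2) *
        (w 2 0 * m 2 0 + w 2 1 * m 2 1 + w 2 2 * m 2 2) * hval 0 -
      x 0 * (w 2 0 * m 2 0 + w 2 1 * m 2 1 + w 2 2 * m 2 2) * hval 1 -
      x 0 * x 1 * hval 2
end
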